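/- For the norm-trace curve X_{q,r} over F_{q^r} and a non-horizontal line L_{α,β}: y = αx + β with α ≠ 0, the number of affine F_{q^r}-rational intersection points n_{q,r}(α,β) depends only on Tr(β) and Norm(α). -/

import Mathlib

/-- The number of affine `F_{q^r}`-rational points of the norm-trace curve
on the line `y = αx + β` (with `α ≠ 0`) depends only on `Norm(α)` and `Tr(β)`. -/
theorem intersection_count_depends_only_on_norm_trace {F : Type*} [Field F] [Fintype F]
    [DecidableEq F] (q r : ℕ) (hq : ∃ p k : ℕ, p.Prime ∧ 0 < k ∧ q = p ^ k) (hr : 2 ≤ r)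
    (hcard : Fintype.card F = q ^ r) (α β α' β' : F) (hα : α ≠ 0) (hα' : α' ≠ 0)
    (hnorm : α ^ ((q ^ r - 1) / (q - 1)) = α' ^ ((q ^ r - 1) / (q - 1)))
    (htr : ∑ i ∈ Finset.range r, β ^ q ^ i = ∑ i ∈ Finset.range r, β' ^ q ^ i) :
    (Finset.univ.filter
        (fun p : F × F => p.2 = α * p.1 + β ∧
          ∑ i ∈ Finset.range r, p.2 ^ q ^ i = p.1 ^ ((q ^ r - 1) / (q - 1)))).card =
    (Finset.univ.filter
        (fun p : F × F => p.2 = α' * p.1 + β' ∧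
          ∑ i ∈ Finset.range r, p.2 ^ q ^ i = p.1 ^ ((q ^ r - 1) / (q - 1)))).card := by
  classical
  obtain ⟨p, k, hp, hk, hqpk⟩ := hq
  -- characteristic of F is p
  have hcharF : CharP F (ringChar F) := ringChar.charP F
  obtain ⟨n, hp', hcard'⟩ := FiniteField.card F (ringChar F)
  have hpp : p = ringChar F := by
    have hdvd : p ∣ Fintype.card F := by
      rw [hcard, hqpk, ← pow_mul]
      exact dvd_pow_self p (by positivity)
    rw [hcard'] at hdvd
    have := hp.dvd_of_dvd_pow hdvd
    exact ((Nat.prime_dvd_prime_iff_eq hp hp').mp this)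
  haveI : CharP F p := hpp ▸ hcharF
  haveI : Fact p.Prime := ⟨hp⟩
  have hadd : ∀ (x y : F) (i : ℕ), (x + y) ^ q ^ i = x ^ q ^ i + y ^ q ^ i := by
    intro x y i
    rw [hqpk, ← pow_mul]
    exact add_pow_char_pow ..
  set N := (q ^ r - 1) / (q - 1) with hN
  have hTr : ∀ x y : F, ∑ i ∈ Finset.range r, (x + y) ^ q ^ i =
      (∑ i ∈ Finset.range r, x ^ q ^ i) + ∑ i ∈ Finset.range r, y ^ q ^ i := by
    intro x y
    rw [← Finset.sum_add_distrib]
    exact Finset.sum_congr rfl fun i _ => hadd x y i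
  set d : F := α * α'⁻¹ with hd
  set e : F := α' * α⁻¹ with he
  have hde : d * e = 1 := by rw [hd, he]; field_simp
  have hdN : d ^ N = 1 := by
    rw [hd, mul_pow, hnorm, inv_pow, mul_inv_cancel₀ (pow_ne_zero _ hα')]
  have heN : e ^ N = 1 := by
    rw [he, mul_pow, ← hnorm, inv_pow, mul_inv_cancel₀ (pow_ne_zero _ hα)]
  apply Finset.card_nbij' (fun pt => (pt.1 * d, α' * (pt.1 * d) + β'))
    (fun pt => (pt.1 * e, α * (pt.1 * e) + β))
  · intro pt hpt
    simp only [Finset.mem_coe, Finset.mem_filter, Finset.mem_univ, true_and] at hpt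
    obtain ⟨hb, hc⟩ := hpt
    refine Finset.mem_filter.mpr ⟨Finset.mem_univ _, rfl, ?_⟩
    have h1 : α' * (pt.1 * d) = α * pt.1 := by rw [hd]; field_simp
    dsimp only
    rw [h1, hTr, ← htr, ← hTr, ← hb, hc, mul_pow, hdN, mul_one]
  · intro pt hpt
    simp only [Finset.mem_coe, Finset.mem_filter, Finset.mem_univ, true_and] at hpt
    obtain ⟨hb, hc⟩ := hpt
    refine Finset.mem_filter.mpr ⟨Finset.mem_univ _, rfl, ?_⟩
    have h1 : α * (pt.1 * e) = α' * pt.1 := by rw [he]; field_simp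
    dsimp only
    rw [h1, hTr, htr, ← hTr, ← hb, hc, mul_pow, heN, mul_one]
  · intro pt hpt
    simp only [Finset.mem_coe, Finset.mem_filter, Finset.mem_univ, true_and] at hpt
    obtain ⟨hb, _⟩ := hpt
    have h1 : pt.1 * d * e = pt.1 := by rw [mul_assoc, hde, mul_one]
    have h2 : α * (pt.1 * d * e) + β = pt.2 := by rw [h1, ← hb]
    exact Prod.ext h1 h2
  · intro pt hpt
    simp only [Finset.mem_coe, Finset.mem_filter, Finset.mem_univ, true_and] at hpt
    obtain ⟨hb, _⟩ := hpt
    have h1 : pt.1 * e * d = pt.1 := by rw [mul_assoc, mul_comm e d, hde, mul_one]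
    have h2 : α' * (pt.1 * e * d) + β' = pt.2 := by rw [h1, ← hb]
    exact Prod.ext h1 h2
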